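/- Let m ≥ 1 and x₁,...,x_N be real numbers that are pairwise distinct modulo 1. If (c₁,...,c_N) ∈ ℝ^N satisfies ∑_{k=1}^N c_k = 0 and ∑_{k=1}^N ∑_{k'=1}^N (−1)^m B_{2m}(x_k − x_{k'}) c_k c_{k'} = 0, then c_k = 0 for all k. -/

import Mathlib

open Complex Real Finset

/-- The periodic Bernoulli-type function `B_{2m}(x) = ∑_{β ≠ 0} e^{-2πiβx}/(2πiβ)^{2m}`. -/
noncomputable def periodicBernoulli (m : ℕ) (x : ℝ) : ℂ :=
  ∑' β : {β : ℤ // β ≠ 0},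
    Complex.exp (-(2 * Real.pi * Complex.I * ((β : ℤ) : ℂ) * x)) /
      (2 * Real.pi * Complex.I * ((β : ℤ) : ℂ)) ^ (2 * m)

lemma pb_summable_core (m : ℕ) (hm : 1 ≤ m) :
    Summable (fun β : {β : ℤ // β ≠ 0} => ((2 * Real.pi * ((β : ℤ) : ℝ)) ^ (2 * m))⁻¹) := by
  have h1 : Summable (fun β : ℤ => (((β : ℝ)) ^ 2)⁻¹) := by
    simpa [one_div] using (summable_one_div_int_pow (p := 2)).mpr one_lt_two
  have h2 := h1.subtype {β : ℤ | β ≠ 0}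
  refine Summable.of_nonneg_of_le (fun β => ?_) (fun β => ?_) h2
  · have : (0:ℝ) ≤ (2 * Real.pi * ((β : ℤ) : ℝ)) ^ (2 * m) :=
      (even_two_mul m).pow_nonneg _
    positivity
  · have hβ : (1:ℝ) ≤ |((β : ℤ) : ℝ)| := by
      rw [← Int.cast_abs]
      exact_mod_cast Int.one_le_abs (by simpa using β.2)
    have h2pi : (1:ℝ) ≤ 2 * Real.pi * |((β : ℤ) : ℝ)| := by nlinarith [Real.pi_gt_three]
    have key : ((β : ℤ) : ℝ) ^ 2 ≤ (2 * Real.pi * ((β : ℤ) : ℝ)) ^ (2 * m) := by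
      have e1 : (2 * Real.pi * ((β : ℤ) : ℝ)) ^ (2 * m)
          = (2 * Real.pi * |((β : ℤ) : ℝ)|) ^ (2 * m) := by
        rw [← (even_two_mul m).pow_abs, abs_mul,
          abs_of_pos (by positivity : (0:ℝ) < 2 * Real.pi)]
      rw [e1]
      calc ((β : ℤ) : ℝ) ^ 2 = |((β : ℤ) : ℝ)| ^ 2 := by rw [_root_.sq_abs]
        _ ≤ (2 * Real.pi * |((β : ℤ) : ℝ)|) ^ 2 := by
            apply pow_le_pow_left₀ (abs_nonneg _)
            nlinarith [Real.pi_gt_three]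
        _ ≤ (2 * Real.pi * |((β : ℤ) : ℝ)|) ^ (2 * m) :=
            pow_le_pow_right₀ h2pi (by omega)
    have hpos : (0:ℝ) < ((β : ℤ) : ℝ) ^ 2 := by
      have : ((β : ℤ) : ℝ) ≠ 0 := by exact_mod_cast β.2
      positivity
    exact inv_anti₀ hpos key

set_option maxHeartbeats 1000000 in
lemma pb_eq (m : ℕ) (d : ℝ) :
    (-1 : ℂ) ^ m * periodicBernoulli m d =
    ∑' β : {β : ℤ // β ≠ 0},
      Complex.exp (-(2 * Real.pi * Complex.I * ((β : ℤ) : ℂ) * d)) *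
        (Complex.ofReal ((2 * Real.pi * ((β : ℤ) : ℝ)) ^ (2 * m)))⁻¹ := by
  rw [periodicBernoulli, ← tsum_mul_left]
  congr 1; funext β
  have hI : (2 * (Real.pi : ℂ) * Complex.I * ((β : ℤ) : ℂ)) ^ (2 * m)
      = Complex.ofReal ((2 * Real.pi * ((β : ℤ) : ℝ)) ^ (2 * m)) * (-1) ^ m := by
    push_cast
    rw [show (2 * (Real.pi : ℂ) * Complex.I * ((β : ℤ) : ℂ))
        = (2 * (Real.pi : ℂ) * ((β : ℤ) : ℂ)) * Complex.I by ring, mul_pow]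
    congr 1
    rw [pow_mul, Complex.I_sq]
  rw [hI]
  have hD : Complex.ofReal ((2 * Real.pi * ((β : ℤ) : ℝ)) ^ (2 * m)) ≠ 0 := by
    have hb : ((β : ℤ) : ℝ) ≠ 0 := by exact_mod_cast β.2
    have h2 : (2 * Real.pi * ((β : ℤ) : ℝ)) ≠ 0 := by positivity
    exact_mod_cast pow_ne_zero _ h2
  have ha : ((-1 : ℂ) ^ m) ≠ 0 := pow_ne_zero _ (by norm_num)
  have hD' : ((2 : ℂ) * (Real.pi : ℂ) * ((β : ℤ) : ℂ)) ^ (2 * m) ≠ 0 := by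
    apply pow_ne_zero
    have hb : (((β : ℤ) : ℂ)) ≠ 0 := by exact_mod_cast β.2
    have hpi : ((Real.pi : ℂ)) ≠ 0 := by exact_mod_cast Real.pi_ne_zero
    exact mul_ne_zero (mul_ne_zero two_ne_zero hpi) hb
  field_simp

theorem quadratic_form_definite (m : ℕ) (hm : 1 ≤ m) (N : ℕ) (x : Fin N → ℝ)
    (hx : ∀ k k', k ≠ k' → ∀ n : ℤ, x k - x k' ≠ n)
    (c : Fin N → ℝ) (hc : ∑ k, c k = 0)
    (hq : ∑ k, ∑ k', ((-1 : ℂ) ^ m * periodicBernoulli m (x k - x k')).re * c k * c k' = 0) :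
    ∀ k, c k = 0 := by
  classical
  -- notation
  set D : {β : ℤ // β ≠ 0} → ℝ := fun β => (2 * Real.pi * ((β : ℤ) : ℝ)) ^ (2 * m) with hDdef
  have hDpos : ∀ β, 0 < D β := by
    intro β
    refine (even_two_mul m).pow_pos ?_
    have hb : ((β : ℤ) : ℝ) ≠ 0 := by exact_mod_cast β.2
    positivity
  set E : {β : ℤ // β ≠ 0} → ℝ → ℂ :=
    fun β y => Complex.exp (-(2 * Real.pi * Complex.I * ((β : ℤ) : ℂ) * y)) with hEdef
  have hE1 : ∀ β y, ‖E β y‖ = 1 := by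
    intro β y
    simp only [hEdef]
    rw [show -(2 * (Real.pi : ℂ) * Complex.I * ((β : ℤ) : ℂ) * (y : ℝ))
        = ((-(2 * Real.pi * ((β : ℤ) : ℝ) * y) : ℝ) : ℂ) * Complex.I by push_cast; ring]
    exact Complex.norm_exp_ofReal_mul_I _
  have hEconj : ∀ β y, (starRingEnd ℂ) (E β y)
      = Complex.exp (2 * Real.pi * Complex.I * ((β : ℤ) : ℂ) * y) := by
    intro β y
    rw [hEdef, ← Complex.exp_conj]
    congr 1
    simp only [map_neg, map_mul, Complex.conj_I, Complex.conj_ofReal, map_intCast,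
      map_ofNat]
    ring
  set S : {β : ℤ // β ≠ 0} → ℂ := fun β => ∑ k, (c k : ℂ) * E β (x k) with hSdef
  set F : Fin N → Fin N → {β : ℤ // β ≠ 0} → ℂ :=
    fun k k' β => (c k : ℂ) * E β (x k) * ((starRingEnd ℂ) ((c k' : ℂ) * E β (x k')))
      * (Complex.ofReal (D β))⁻¹ with hFdef
  -- summability of F
  have hFs : ∀ k k', Summable (F k k') := by
    intro k k'
    apply Summable.of_norm
    have hbound : ∀ β, ‖F k k' β‖ = |c k| * |c k'| * (D β)⁻¹ := by
      intro β
      rw [hFdef]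
      simp only [norm_mul, norm_inv, map_mul, Complex.norm_conj,
        Complex.norm_real, Real.norm_eq_abs, hE1, mul_one, abs_of_pos (hDpos β)]
    simp_rw [hbound]
    refine ((pb_summable_core m hm).mul_left (|c k| * |c k'|)).congr fun β => ?_
    rw [hDdef]
  -- step: rewrite hq as real part of a complex double sum
  have hq' : (∑ k, ∑ k', ((-1 : ℂ) ^ m * periodicBernoulli m (x k - x k'))
        * (c k : ℂ) * (c k' : ℂ)).re = 0 := by
    rw [Complex.re_sum]
    rw [← hq]
    refine Finset.sum_congr rfl fun k _ => ?_
    rw [Complex.re_sum]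
    refine Finset.sum_congr rfl fun k' _ => ?_
    simp [Complex.mul_re, Complex.ofReal_re, Complex.ofReal_im]
  -- step: each entry equals a tsum of F
  have hentry : ∀ k k', ((-1 : ℂ) ^ m * periodicBernoulli m (x k - x k'))
      * (c k : ℂ) * (c k' : ℂ) = ∑' β, F k k' β := by
    intro k k'
    rw [pb_eq, ← tsum_mul_right, ← tsum_mul_right]
    refine tsum_congr fun β => ?_
    rw [hFdef]
    simp only [map_mul, hEconj, Complex.conj_ofReal]
    rw [hEdef]
    simp only []
    rw [show -(2 * (Real.pi : ℂ) * Complex.I * ((β : ℤ) : ℂ) * ((x k - x k' : ℝ) : ℂ))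
        = -(2 * Real.pi * Complex.I * ((β : ℤ) : ℂ) * (x k : ℂ))
          + 2 * Real.pi * Complex.I * ((β : ℤ) : ℂ) * (x k' : ℂ) by push_cast; ring,
      Complex.exp_add]
    rw [hDdef]
    ring
  -- swap sums
  have hsumsum : ∀ k, Summable (fun β => ∑ k', F k k' β) := fun k =>
    summable_sum fun k' _ => hFs k k'
  have hswap : ∑ k, ∑ k', ∑' β, F k k' β = ∑' β, ∑ k, ∑ k', F k k' β := by
    calc ∑ k, ∑ k', ∑' β, F k k' β = ∑ k, ∑' β, ∑ k', F k k' β := by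
          refine Finset.sum_congr rfl fun k _ => ?_
          exact (Summable.tsum_finsetSum fun k' _ => hFs k k').symm
      _ = ∑' β, ∑ k, ∑ k', F k k' β := (Summable.tsum_finsetSum fun k _ => hsumsum k).symm
  -- inner sum is |S β|² / D β
  have hinner : ∀ β, ∑ k, ∑ k', F k k' β
      = Complex.ofReal (Complex.normSq (S β) * (D β)⁻¹) := by
    intro β
    have h1 : ∑ k, ∑ k', F k k' β
        = S β * (starRingEnd ℂ) (S β) * (Complex.ofReal (D β))⁻¹ := by
      rw [hSdef]
      simp only [map_sum, Finset.sum_mul, Finset.mul_sum]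
      rw [Finset.sum_comm]
    rw [h1, Complex.mul_conj]
    push_cast
    ring
  -- the real series
  set g : {β : ℤ // β ≠ 0} → ℝ := fun β => Complex.normSq (S β) * (D β)⁻¹ with hgdef
  have hgsum : Summable g := by
    have h := summable_sum (s := Finset.univ) fun k (_ : k ∈ Finset.univ) => hsumsum k
    have h2 : Summable fun β => Complex.ofReal (g β) := by
      refine h.congr fun β => ?_
      exact hinner β
    rwa [Complex.summable_ofReal] at h2
  have hgzero : ∑' β, g β = 0 := by
    have h1 : ∑' β, Complex.ofReal (g β) = ∑ k, ∑ k', ∑' β, F k k' β := by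
      rw [hswap]
      exact tsum_congr fun β => (hinner β).symm
    have h2 : (∑' β, Complex.ofReal (g β)).re = 0 := by
      rw [h1]
      rw [← hq']
      refine congrArg Complex.re ?_
      exact Finset.sum_congr rfl fun k _ => Finset.sum_congr rfl fun k' _ =>
        (hentry k k').symm
    rwa [← Complex.ofReal_tsum, Complex.ofReal_re] at h2
  have hgnonneg : ∀ β, 0 ≤ g β := fun β =>
    mul_nonneg (Complex.normSq_nonneg _) (le_of_lt (inv_pos.mpr (hDpos β)))
  have hSzero : ∀ β, S β = 0 := by
    intro β
    have h1 : g β ≤ 0 := hgzero ▸ Summable.le_tsum hgsum β fun j _ => hgnonneg j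
    have h2 : g β = 0 := le_antisymm h1 (hgnonneg β)
    rw [hgdef] at h2
    have h3 : Complex.normSq (S β) = 0 := by
      rcases mul_eq_zero.mp h2 with h | h
      · exact h
      · exact absurd h (ne_of_gt (inv_pos.mpr (hDpos β)))
    exact Complex.normSq_eq_zero.mp h3
  -- Vandermonde step
  set z : Fin N → ℂ := fun k => Complex.exp (-(2 * Real.pi * Complex.I * (x k : ℂ))) with hzdef
  have hzinj : Function.Injective z := by
    intro k k' hkk'
    by_contra hne
    rw [hzdef] at hkk'
    simp only [] at hkk'
    rw [Complex.exp_eq_exp_iff_exists_int] at hkk'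
    obtain ⟨n, hn⟩ := hkk'
    have h2piI : (2 * (Real.pi : ℂ) * Complex.I) ≠ 0 := by
      have hpi : ((Real.pi : ℂ)) ≠ 0 := by exact_mod_cast Real.pi_ne_zero
      exact mul_ne_zero (mul_ne_zero two_ne_zero hpi) Complex.I_ne_zero
    have key : ((x k' - x k : ℝ) : ℂ) = ((n : ℤ) : ℂ) := by
      apply mul_left_cancel₀ h2piI
      push_cast
      -- (cast of hn not needed)
      linear_combination hn
    have : (x k' - x k : ℝ) = ((n : ℤ) : ℝ) := by exact_mod_cast key
    exact hx k' k (Ne.symm hne) n this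
  have hpow : ∀ n : ℕ, ∑ k, (c k : ℂ) * z k ^ n = 0 := by
    intro n
    rcases Nat.eq_zero_or_pos n with h0 | hpos
    · subst h0
      simp only [pow_zero, mul_one]
      rw [← Complex.ofReal_sum]
      exact_mod_cast congrArg Complex.ofReal hc
    · have hβ : ((n : ℤ)) ≠ 0 := by exact_mod_cast hpos.ne'
      have := hSzero ⟨(n : ℤ), hβ⟩
      rw [hSdef] at this
      rw [← this]
      refine Finset.sum_congr rfl fun k _ => ?_
      congr 1
      rw [hEdef, hzdef]
      simp only []
      rw [show -(2 * (Real.pi : ℂ) * Complex.I * (((n : ℤ) : ℤ) : ℂ) * (x k : ℂ))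
          = ((n : ℤ) : ℂ) * -(2 * Real.pi * Complex.I * (x k : ℂ)) by push_cast; ring,
        Complex.exp_int_mul]
      rw [zpow_natCast]
  -- conclude via Vandermonde matrix
  set M : Matrix (Fin N) (Fin N) ℂ := Matrix.vandermonde z with hMdef
  have hdet : IsUnit M.det := by
    rw [isUnit_iff_ne_zero, hMdef, Matrix.det_vandermonde_ne_zero_iff]
    exact hzinj
  have hvm : Matrix.vecMul (fun k => (c k : ℂ)) M = 0 := by
    funext n
    rw [hMdef]
    simpa [Matrix.vecMul, Matrix.vandermonde, dotProduct] using hpow (n : ℕ)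
  have hcC : (fun k => (c k : ℂ)) = 0 := by
    have h := congrArg (fun v => Matrix.vecMul v M⁻¹) hvm
    simpa [Matrix.vecMul_vecMul, Matrix.mul_nonsing_inv M hdet] using h
  intro k
  have h := congrFun hcC k
  rw [Pi.zero_apply] at h
  exact_mod_cast h
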